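/- Let X be a Banach space and A(n) ∈ L(X) for n ∈ ℤ. Suppose there are projections P(n), α > 0, and tempered positive numbers K(n) giving an exponential dichotomy as in the standard definition: ‖U(n,m)P(m)‖ ≤ K(m)e^{-α(n-m)} for n ≥ m and ‖U(n,m)(Id − P(m))‖ ≤ K(m)e^{α(n-m)} for n ≤ m, with P(n+1)A(n) = A(n)P(n). Define the Green function G(n,m) = U(n,m)P(m) for n ≥ m and G(n,m) = −U(n,m)(Id − P(m)) for n < m. Then for any β with |β| < α and any sequence f with sup_k K(k)e^{-β k}|f(k)| < ∞, the sequence x(n) = Σ_{k∈ℤ} G(n,k)f(k) is well-defined (absolutely convergent), satisfies x(n+1) = A(n)x(n) + f(n+1) for all n ∈ ℤ, and sup_n e^{-β n}|x(n)| ≤ γ · sup_k K(k)e^{-β k}|f(k)| where γ = (1 + e^{-(α-β)})/(1 - e^{-(α-|β|)}). -/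

import Mathlib

/-- given a tempered exponential dichotomy with Green function
`G(n,m) = U(n,m)P(m)` for `n ≥ m` and `-U(n,m)(Id-P(m))` for `n < m`, for any `|β| < α`
and any input `f` with `sup_k K(k)e^{-βk}‖f(k)‖ ≤ M`, the series
`x(n) = Σ_k G(n,k)f(k)` converges absolutely, solves `x(n+1) = A(n)x(n) + f(n+1)`,
and satisfies `e^{-βn}‖x(n)‖ ≤ γ M` with `γ = (1+e^{-(α-β)})/(1-e^{-(α-|β|)})`. -/
theorem stmt_4 {X : Type*} [NormedAddCommGroup X] [NormedSpace ℝ X] [CompleteSpace X]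
    (A : ℤ → X →L[ℝ] X) (U : ℤ → ℤ → X →L[ℝ] X) (P : ℤ → X →L[ℝ] X)
    (G : ℤ → ℤ → X →L[ℝ] X)
    (α β : ℝ) (K : ℤ → ℝ)
    (hα : 0 < α) (hβ : |β| < α) (hK : ∀ n, 0 < K n)
    (hU0 : ∀ m : ℤ, U m m = 1)
    (hUstep : ∀ n m : ℤ, m ≤ n → U (n + 1) m = (A n).comp (U n m))
    (hproj : ∀ n : ℤ, (P n).comp (P n) = P n)
    (hcomm : ∀ n : ℤ, (P (n + 1)).comp (A n) = (A n).comp (P n))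
    (hs : ∀ n m : ℤ, m ≤ n →
      ‖(U n m).comp (P m)‖ ≤ K m * Real.exp (-α * ((n : ℝ) - (m : ℝ))))
    (hu : ∀ n m : ℤ, n ≤ m →
      ‖(U n m).comp (1 - P m)‖ ≤ K m * Real.exp (-α * ((m : ℝ) - (n : ℝ))))
    (hinv : ∀ n m : ℤ, n ≤ m → (U n m).comp ((1 - P m).comp (U m n)) = 1 - P n)
    (hback : ∀ n m : ℤ, n < m →
      (A n).comp ((U n m).comp (1 - P m)) = (U (n + 1) m).comp (1 - P m))
    (hGs : ∀ n m : ℤ, m ≤ n → G n m = (U n m).comp (P m))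
    (hGu : ∀ n m : ℤ, n < m → G n m = -((U n m).comp (1 - P m)))
    (f : ℤ → X) (M : ℝ)
    (hf : ∀ k : ℤ, K k * Real.exp (-β * (k : ℝ)) * ‖f k‖ ≤ M) :
    (∀ n : ℤ, Summable fun k : ℤ => ‖G n k (f k)‖) ∧
    (∀ n : ℤ, (∑' k : ℤ, G (n + 1) k (f k)) = A n (∑' k : ℤ, G n k (f k)) + f (n + 1)) ∧
    (∀ n : ℤ, Real.exp (-β * (n : ℝ)) * ‖∑' k : ℤ, G n k (f k)‖ ≤
      (1 + Real.exp (-(α - β))) / (1 - Real.exp (-(α - |β|))) * M) := by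
  set a := Real.exp (-(α - β)) with ha_def
  set b := Real.exp (-(α + β)) with hb_def
  set v := Real.exp (-(α - |β|)) with hv_def
  have hβα : β < α := (le_abs_self β).trans_lt hβ
  have hβα' : -β < α := (neg_le_abs β).trans_lt hβ
  have ha0 : 0 < a := Real.exp_pos _
  have hb0 : 0 < b := Real.exp_pos _
  have hv0 : 0 < v := Real.exp_pos _
  have ha1 : a < 1 := Real.exp_lt_one_iff.2 (by linarith)
  have hb1 : b < 1 := Real.exp_lt_one_iff.2 (by linarith)
  have hv1 : v < 1 := Real.exp_lt_one_iff.2 (by linarith)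
  have hav : a ≤ v := Real.exp_le_exp.2 (by have := le_abs_self β; linarith)
  have hbv : b ≤ v := Real.exp_le_exp.2 (by have := neg_le_abs β; linarith)
  have h1a : (0:ℝ) < 1 - a := by linarith
  have h1b : (0:ℝ) < 1 - b := by linarith
  have h1v : (0:ℝ) < 1 - v := by linarith
  have hM : 0 ≤ M := le_trans (mul_nonneg (mul_nonneg (hK 0).le (Real.exp_pos _).le) (norm_nonneg _)) (hf 0)
  -- weight function
  set h : ℤ → ℝ := fun j => if 0 < j then a ^ j.toNat else b ^ (-j).toNat with hh_def
  have hh_nonneg : ∀ j, 0 ≤ h j := by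
    intro j; rw [hh_def]; dsimp only; split <;> positivity
  -- bound on K k * ‖f k‖
  have hfb : ∀ k : ℤ, K k * ‖f k‖ ≤ M * Real.exp (β * k) := by
    intro k
    have h1 := mul_le_mul_of_nonneg_right (hf k) (Real.exp_pos (β * k)).le
    have h2 : Real.exp (-β * k) * Real.exp (β * k) = 1 := by
      rw [← Real.exp_add]; ring_nf; exact Real.exp_zero
    calc K k * ‖f k‖ = K k * Real.exp (-β * k) * ‖f k‖ * Real.exp (β * k) := by
          rw [show K k * Real.exp (-β * k) * ‖f k‖ * Real.exp (β * k)
              = K k * ‖f k‖ * (Real.exp (-β * k) * Real.exp (β * k)) from by ring, h2, mul_one]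
      _ ≤ M * Real.exp (β * k) := h1
  -- the key pointwise bound
  have claimA : ∀ n k : ℤ, ‖G n k (f k)‖ ≤ M * Real.exp (β * n) * h (k - n) := by
    intro n k
    rcases le_or_gt k n with hkn | hkn
    · have hG : ‖G n k‖ ≤ K k * Real.exp (-α * ((n:ℝ) - k)) := by
        rw [hGs n k hkn]; exact hs n k hkn
      have hcast : (((-(k - n)).toNat : ℕ) : ℝ) = (n:ℝ) - k := by
        rw [show (((-(k - n)).toNat : ℕ) : ℝ) = (((-(k - n)).toNat : ℤ) : ℝ) by norm_cast,
          Int.toNat_of_nonneg (by omega)]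
        push_cast; ring
      have hh : h (k - n) = Real.exp (-(α + β) * ((n:ℝ) - k)) := by
        rw [hh_def]; dsimp only
        rw [if_neg (by omega), hb_def, ← Real.exp_nat_mul, hcast]
        ring_nf
      have harg : -α * ((n:ℝ) - k) + β * k = β * n + -(α + β) * ((n:ℝ) - k) := by ring
      calc ‖G n k (f k)‖ ≤ ‖G n k‖ * ‖f k‖ := (G n k).le_opNorm _
        _ ≤ K k * Real.exp (-α * ((n:ℝ) - k)) * ‖f k‖ :=
            mul_le_mul_of_nonneg_right hG (norm_nonneg _)
        _ = Real.exp (-α * ((n:ℝ) - k)) * (K k * ‖f k‖) := by ring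
        _ ≤ Real.exp (-α * ((n:ℝ) - k)) * (M * Real.exp (β * k)) :=
            mul_le_mul_of_nonneg_left (hfb k) (Real.exp_pos _).le
        _ = M * (Real.exp (-α * ((n:ℝ) - k) + β * k)) := by rw [Real.exp_add]; ring
        _ = M * Real.exp (β * n) * h (k - n) := by
            rw [harg, Real.exp_add, hh]; ring
    · have hG : ‖G n k‖ ≤ K k * Real.exp (-α * ((k:ℝ) - n)) := by
        rw [hGu n k hkn, norm_neg]; exact hu n k hkn.le
      have hcast : (((k - n).toNat : ℕ) : ℝ) = (k:ℝ) - n := by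
        rw [show (((k - n).toNat : ℕ) : ℝ) = (((k - n).toNat : ℤ) : ℝ) by norm_cast,
          Int.toNat_of_nonneg (by omega)]
        push_cast; ring
      have hh : h (k - n) = Real.exp (-(α - β) * ((k:ℝ) - n)) := by
        rw [hh_def]; dsimp only
        rw [if_pos (by omega), ha_def, ← Real.exp_nat_mul, hcast]
        ring_nf
      have harg : -α * ((k:ℝ) - n) + β * k = β * n + -(α - β) * ((k:ℝ) - n) := by ring
      calc ‖G n k (f k)‖ ≤ ‖G n k‖ * ‖f k‖ := (G n k).le_opNorm _
        _ ≤ K k * Real.exp (-α * ((k:ℝ) - n)) * ‖f k‖ :=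
            mul_le_mul_of_nonneg_right hG (norm_nonneg _)
        _ = Real.exp (-α * ((k:ℝ) - n)) * (K k * ‖f k‖) := by ring
        _ ≤ Real.exp (-α * ((k:ℝ) - n)) * (M * Real.exp (β * k)) :=
            mul_le_mul_of_nonneg_left (hfb k) (Real.exp_pos _).le
        _ = M * (Real.exp (-α * ((k:ℝ) - n) + β * k)) := by rw [Real.exp_add]; ring
        _ = M * Real.exp (β * n) * h (k - n) := by
            rw [harg, Real.exp_add, hh]; ring
  -- summability of h
  have hnat : (fun m : ℕ => h (m : ℤ)) = fun m : ℕ => a ^ m := by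
    funext m
    cases m with
    | zero => simp [hh_def]
    | succ m =>
        rw [hh_def]; dsimp only
        rw [if_pos (by positivity)]
        congr 1 <;> omega
  have hneg : (fun m : ℕ => h (-((m : ℤ) + 1))) = fun m : ℕ => b * b ^ m := by
    funext m
    rw [hh_def]; dsimp only
    rw [if_neg (by omega), ← pow_succ']
    congr 1 <;> omega
  have hS : HasSum h ((1 - a)⁻¹ + b * (1 - b)⁻¹) := by
    refine HasSum.of_nat_of_neg_add_one ?_ ?_
    · rw [hnat]; exact hasSum_geometric_of_lt_one ha0.le ha1
    · rw [hneg]; exact (hasSum_geometric_of_lt_one hb0.le hb1).mul_left b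
  have hbig : ∀ n : ℤ, Summable fun k : ℤ => M * Real.exp (β * n) * h (k - n) := by
    intro n
    refine Summable.mul_left _ ?_
    exact (hS.summable.comp_injective (Equiv.subRight n).injective : _)
  -- Part 1
  have hsum : ∀ n : ℤ, Summable fun k : ℤ => ‖G n k (f k)‖ := by
    intro n
    exact Summable.of_nonneg_of_le (fun k => norm_nonneg _) (fun k => claimA n k) (hbig n)
  have hxsum : ∀ n : ℤ, Summable fun k : ℤ => G n k (f k) := fun n => (hsum n).of_norm
  refine ⟨hsum, ?_, ?_⟩
  -- Part 2
  · intro n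
    have key : ∀ k : ℤ, G (n + 1) k (f k)
        = A n (G n k (f k)) + (if k = n + 1 then f (n + 1) else 0) := by
      intro k
      rcases lt_trichotomy k (n + 1) with hk | hk | hk
      · have hkn : k ≤ n := by omega
        rw [if_neg (by omega), add_zero, hGs (n+1) k (by omega), hGs n k hkn, hUstep n k hkn]
        simp [ContinuousLinearMap.comp_apply]
      · subst hk
        rw [if_pos rfl, hGs (n+1) (n+1) le_rfl, hU0, hGu n (n+1) (by omega)]
        have h2 := hback n (n+1) (by omega)
        rw [hU0] at h2
        have h3 := DFunLike.congr_fun h2 (f (n+1))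
        simp only [ContinuousLinearMap.comp_apply, ContinuousLinearMap.one_apply,
          ContinuousLinearMap.sub_apply] at h3
        simp only [ContinuousLinearMap.comp_apply, ContinuousLinearMap.one_apply,
          ContinuousLinearMap.sub_apply, ContinuousLinearMap.neg_apply, map_neg, h3]
        abel
      · rw [if_neg (by omega), add_zero, hGu (n+1) k hk, hGu n k (by omega)]
        have h2 := hback n k (by omega)
        have h3 := DFunLike.congr_fun h2 (f k)
        simp only [ContinuousLinearMap.comp_apply] at h3
        simp only [ContinuousLinearMap.neg_apply, ContinuousLinearMap.comp_apply, map_neg, h3]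
    have hA : Summable fun k : ℤ => A n (G n k (f k)) := by
      have := (hxsum n).map (A n) (A n).continuous
      exact this
    have hite : Summable fun k : ℤ => (if k = n + 1 then f (n + 1) else 0) :=
      (hasSum_ite_eq (n + 1) (f (n + 1))).summable
    calc (∑' k : ℤ, G (n + 1) k (f k))
        = ∑' k : ℤ, (A n (G n k (f k)) + (if k = n + 1 then f (n + 1) else 0)) :=
          tsum_congr key
      _ = (∑' k : ℤ, A n (G n k (f k))) + ∑' k : ℤ, (if k = n + 1 then f (n + 1) else 0) :=
          Summable.tsum_add hA hite
      _ = A n (∑' k : ℤ, G n k (f k)) + f (n + 1) := by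
          rw [← (A n).map_tsum (hxsum n), tsum_ite_eq]
  -- Part 3
  · intro n
    have step1 : b * (1 - b)⁻¹ ≤ v * (1 - v)⁻¹ := by
      rw [← div_eq_mul_inv, ← div_eq_mul_inv, div_le_div_iff₀ h1b h1v]
      nlinarith
    have step2 : (1 - a)⁻¹ + v * (1 - v)⁻¹ ≤ (1 + a) / (1 - v) := by
      rw [← div_eq_mul_inv, inv_eq_one_div, div_add_div _ _ h1a.ne' h1v.ne',
        div_le_div_iff₀ (mul_pos h1a h1v) h1v]
      nlinarith [mul_nonneg ha0.le (sub_nonneg.2 hav), h1v.le]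
    have hfrac : (1 - a)⁻¹ + b * (1 - b)⁻¹ ≤ (1 + a) / (1 - v) :=
      le_trans (add_le_add_right step1 _) step2
    have hcancel : ∀ t : ℝ, Real.exp (-β * n) * (M * Real.exp (β * n) * t) = M * t := by
      intro t
      have h2 : Real.exp (-β * n) * Real.exp (β * n) = 1 := by
        rw [← Real.exp_add]; ring_nf; exact Real.exp_zero
      calc Real.exp (-β * n) * (M * Real.exp (β * n) * t)
          = Real.exp (-β * n) * Real.exp (β * n) * (M * t) := by ring
        _ = M * t := by rw [h2, one_mul]
    calc Real.exp (-β * (n:ℝ)) * ‖∑' k : ℤ, G n k (f k)‖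
        ≤ Real.exp (-β * (n:ℝ)) * ∑' k : ℤ, ‖G n k (f k)‖ :=
          mul_le_mul_of_nonneg_left (norm_tsum_le_tsum_norm (hsum n)) (Real.exp_pos _).le
      _ ≤ Real.exp (-β * (n:ℝ)) * ∑' k : ℤ, (M * Real.exp (β * n) * h (k - n)) :=
          mul_le_mul_of_nonneg_left
            (Summable.tsum_le_tsum (fun k => claimA n k) (hsum n) (hbig n)) (Real.exp_pos _).le
      _ = M * ∑' k : ℤ, h (k - n) := by rw [tsum_mul_left, hcancel]
      _ = M * ((1 - a)⁻¹ + b * (1 - b)⁻¹) := by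
          rw [show (∑' k : ℤ, h (k - n)) = ∑' k : ℤ, h ((Equiv.subRight n) k) from rfl,
            (Equiv.subRight n).tsum_eq h, hS.tsum_eq]
      _ ≤ M * ((1 + a) / (1 - v)) := mul_le_mul_of_nonneg_left hfrac hM
      _ = (1 + a) / (1 - v) * M := by ring
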